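/- Let μ ≥ 1 and define a_μ : [0,1] → ℝ by a_μ(x) = μ sin(5πx) for x ∈ [0, 0.2) ∪ (0.8, 1] and a_μ(x) = sin(5πx) for x ∈ [0.2, 0.8]. Then −2 ∫₀¹ a_μ(x) sin³(πx) dx = −( √((5 − √5)/2) · (5 − √5)² · (μ − 1) ) / (128π). In particular this quantity is negative for every μ > 1. -/

import Mathlib

open Set

/-- The piecewise weight `a_μ(x) = μ sin(5πx)` for `x ∈ [0,0.2) ∪ (0.8,1]` and
`a_μ(x) = sin(5πx)` for `x ∈ [0.2,0.8]`. -/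
noncomputable def aMu (μ x : ℝ) : ℝ :=
  open scoped Classical in
  if x ∈ Set.Ico (0:ℝ) 0.2 ∪ Set.Ioc (0.8:ℝ) 1 then μ * Real.sin (5 * Real.pi * x)
  else Real.sin (5 * Real.pi * x)

section aux17

open Real MeasureTheory intervalIntegral

private lemma trig17 (t : ℝ) : Real.sin (5*t) * Real.sin t ^ 3
    = (3 * Real.cos (4*t) - 3 * Real.cos (6*t) - Real.cos (2*t) + Real.cos (8*t)) / 8 := by
  have h2s : Real.sin (2*t) = 2 * Real.sin t * Real.cos t := Real.sin_two_mul t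
  have h2c : Real.cos (2*t) = 1 - 2 * Real.sin t ^ 2 := by
    rw [Real.cos_two_mul']; linear_combination Real.sin_sq_add_cos_sq t
  have h4s : Real.sin (4*t) = 2 * Real.sin (2*t) * Real.cos (2*t) := by
    rw [show (4:ℝ)*t = 2*(2*t) by ring, Real.sin_two_mul]
  have h4c : Real.cos (4*t) = 1 - 2 * Real.sin (2*t) ^ 2 := by
    rw [show (4:ℝ)*t = 2*(2*t) by ring, Real.cos_two_mul' (2*t)]
    linear_combination Real.sin_sq_add_cos_sq (2*t)
  have h8c : Real.cos (8*t) = 1 - 2 * Real.sin (4*t) ^ 2 := by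
    rw [show (8:ℝ)*t = 2*(4*t) by ring, Real.cos_two_mul' (4*t)]
    linear_combination Real.sin_sq_add_cos_sq (4*t)
  have h6c : Real.cos (6*t) = Real.cos (4*t) * Real.cos (2*t) - Real.sin (4*t) * Real.sin (2*t) := by
    rw [show (6:ℝ)*t = 4*t + 2*t by ring, Real.cos_add]
  have h5s : Real.sin (5*t) = Real.sin (4*t) * Real.cos t + Real.cos (4*t) * Real.sin t := by
    rw [show (5:ℝ)*t = 4*t + t by ring, Real.sin_add]
  rw [h5s, h8c, h6c, h4s, h4c, h2s, h2c]
  linear_combination (Real.sin t)^2 * (Real.sin_sq_add_cos_sq t)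

noncomputable def F17 (x : ℝ) : ℝ :=
  (3 * Real.sin (4*Real.pi*x) / 4 - Real.sin (6*Real.pi*x) / 2
    - Real.sin (2*Real.pi*x) / 2 + Real.sin (8*Real.pi*x) / 8) / (8*Real.pi)

private lemma hasDeriv_F17 (x : ℝ) :
    HasDerivAt F17 (Real.sin (5*Real.pi*x) * Real.sin (Real.pi*x) ^ 3) x := by
  have hk : ∀ k : ℝ, HasDerivAt (fun y => Real.sin (k*Real.pi*y))
      (Real.cos (k*Real.pi*x) * (k*Real.pi)) x := fun k => by
    simpa using ((hasDerivAt_id x).const_mul (k*Real.pi)).sin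
  have H := (((((((hk 4).const_mul 3).div_const 4).sub ((hk 6).div_const 2)).sub
      ((hk 2).div_const 2)).add ((hk 8).div_const 8)).div_const (8*Real.pi))
  refine H.congr_deriv ?_
  have hπ : Real.pi ≠ 0 := Real.pi_ne_zero
  have := trig17 (Real.pi * x)
  rw [show 5*(Real.pi*x) = 5*Real.pi*x by ring, show 4*(Real.pi*x) = 4*Real.pi*x by ring,
    show 6*(Real.pi*x) = 6*Real.pi*x by ring, show 2*(Real.pi*x) = 2*Real.pi*x by ring,
    show 8*(Real.pi*x) = 8*Real.pi*x by ring] at this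
  rw [this]
  field_simp
  ring

private lemma contS17 : Continuous (fun x : ℝ => Real.sin (5*Real.pi*x) * Real.sin (Real.pi*x) ^ 3) := by
  fun_prop

private lemma intS17 (a b : ℝ) :
    ∫ x in a..b, Real.sin (5*Real.pi*x) * Real.sin (Real.pi*x) ^ 3 = F17 b - F17 a :=
  intervalIntegral.integral_eq_sub_of_hasDerivAt (fun x _ => hasDeriv_F17 x)
    (contS17.intervalIntegrable a b)

private lemma hF17_0 : F17 0 = 0 := by simp [F17]

private lemma hF17_1 : F17 1 = 0 := by
  have h : ∀ n : ℕ, Real.sin ((n:ℝ) * Real.pi * 1) = 0 := fun n => by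
    simpa using Real.sin_nat_mul_pi n
  simp only [F17]
  rw [show (4:ℝ)*Real.pi*1 = ((4:ℕ):ℝ)*Real.pi*1 by norm_num,
    show (6:ℝ)*Real.pi*1 = ((6:ℕ):ℝ)*Real.pi*1 by norm_num,
    show (2:ℝ)*Real.pi*1 = ((2:ℕ):ℝ)*Real.pi*1 by norm_num,
    show (8:ℝ)*Real.pi*1 = ((8:ℕ):ℝ)*Real.pi*1 by norm_num, h, h, h, h]
  simp

private lemma sin25 : Real.sin (2*Real.pi/5) = 2 * Real.sin (Real.pi/5) * Real.cos (Real.pi/5) := by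
  rw [show 2*Real.pi/5 = 2*(Real.pi/5) by ring, Real.sin_two_mul]

private lemma hF17_02 : F17 0.2
    = (5 * Real.sin (Real.pi/5) - 5 * (2 * Real.sin (Real.pi/5) * Real.cos (Real.pi/5)) / 2)
      / (4 * (8*Real.pi)) := by
  simp only [F17]
  rw [show (0.2:ℝ) = 1/5 by norm_num]
  rw [show 4*Real.pi*(1/5:ℝ) = Real.pi - Real.pi/5 by ring, Real.sin_pi_sub]
  rw [show 6*Real.pi*(1/5:ℝ) = Real.pi/5 + Real.pi by ring, Real.sin_add_pi]
  rw [show 2*Real.pi*(1/5:ℝ) = 2*Real.pi/5 by ring, sin25]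
  rw [show 8*Real.pi*(1/5:ℝ) = (Real.pi - 2*Real.pi/5) + Real.pi by ring, Real.sin_add_pi,
    Real.sin_pi_sub, sin25]
  ring

private lemma hF17_08 : F17 0.8 = -F17 0.2 := by
  rw [hF17_02]
  simp only [F17]
  rw [show (0.8:ℝ) = 4/5 by norm_num]
  rw [show 4*Real.pi*(4/5:ℝ) = (Real.pi/5 + Real.pi) + 2*Real.pi by ring,
    Real.sin_add_two_pi, Real.sin_add_pi]
  rw [show 6*Real.pi*(4/5:ℝ) = ((Real.pi - Real.pi/5) + 2*Real.pi) + 2*Real.pi by ring,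
    Real.sin_add_two_pi, Real.sin_add_two_pi, Real.sin_pi_sub]
  rw [show 2*Real.pi*(4/5:ℝ) = ((Real.pi - 2*Real.pi/5) + Real.pi) by ring,
    Real.sin_add_pi, Real.sin_pi_sub, sin25]
  rw [show 8*Real.pi*(4/5:ℝ) = ((2*Real.pi/5 + 2*Real.pi) + 2*Real.pi) + 2*Real.pi by ring,
    Real.sin_add_two_pi, Real.sin_add_two_pi, Real.sin_add_two_pi, sin25]
  ring

end aux17

/-- For `μ ≥ 1`:
`-2 ∫₀¹ a_μ(x) sin³(πx) dx = -(√((5 − √5)/2)·(5 − √5)²·(μ − 1))/(128π)`, and this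
quantity is negative whenever `μ > 1`. -/
theorem stmt_17 (μ : ℝ) (hμ : 1 ≤ μ) :
    (-2 * ∫ x in (0:ℝ)..1, aMu μ x * Real.sin (Real.pi * x) ^ 3
      = -(Real.sqrt ((5 - Real.sqrt 5) / 2) * (5 - Real.sqrt 5) ^ 2 * (μ - 1))
          / (128 * Real.pi)) ∧
    (1 < μ →
      -2 * ∫ x in (0:ℝ)..1, aMu μ x * Real.sin (Real.pi * x) ^ 3 < 0) := by
  classical
  set S : ℝ → ℝ := fun x => Real.sin (5*Real.pi*x) * Real.sin (Real.pi*x) ^ 3 with hSdef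
  set U : Set ℝ := Set.Ico (0:ℝ) 0.2 ∪ Set.Ioc (0.8:ℝ) 1 with hUdef
  have hU : MeasurableSet U := measurableSet_Ico.union measurableSet_Ioc
  have hg : (fun x => aMu μ x * Real.sin (Real.pi*x) ^ 3)
      = fun x => S x + (μ - 1) * U.indicator S x := by
    funext x
    by_cases hx : x ∈ U
    · rw [aMu, if_pos hx]; simp only [Set.indicator_of_mem hx, hSdef]; ring
    · rw [aMu, if_neg hx]; simp only [Set.indicator_of_notMem hx, hSdef]; ring
  have hInt : ∀ a b : ℝ, IntervalIntegrable (fun x => aMu μ x * Real.sin (Real.pi*x) ^ 3)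
      MeasureTheory.volume a b := by
    intro a b
    rw [hg]
    have h1 : MeasureTheory.IntegrableOn S (Set.uIoc a b) MeasureTheory.volume := by
      rw [← intervalIntegrable_iff]
      exact contS17.intervalIntegrable a b
    refine (contS17.intervalIntegrable a b).add ?_
    apply IntervalIntegrable.const_mul
    rw [intervalIntegrable_iff]
    exact h1.indicator hU
  have key : ∀ a b : ℝ, (∀ x, x ∈ Set.uIoc a b → x ∈ U ∨ x = (0.2:ℝ)) →
      ∫ x in a..b, aMu μ x * Real.sin (Real.pi*x) ^ 3 = μ * (F17 b - F17 a) := by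
    intro a b hab
    rw [← intS17 a b, ← intervalIntegral.integral_const_mul]
    apply intervalIntegral.integral_congr_ae
    have h02 : ∀ᵐ x : ℝ, x ≠ (0.2:ℝ) := by
      have := MeasureTheory.measure_eq_zero_iff_ae_notMem.mp
        (MeasureTheory.measure_singleton (μ := MeasureTheory.volume) (0.2:ℝ))
      filter_upwards [this] with x hx
      simpa using hx
    filter_upwards [h02] with x hx hxi
    rcases hab x hxi with h | h
    · rw [aMu, if_pos h]; ring
    · exact absurd h hx
  have e1 : ∫ x in (0:ℝ)..0.2, aMu μ x * Real.sin (Real.pi*x) ^ 3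
      = μ * (F17 0.2 - F17 0) := by
    apply key
    intro x hx
    rw [Set.uIoc_of_le (by norm_num : (0:ℝ) ≤ 0.2)] at hx
    rcases eq_or_lt_of_le hx.2 with h | h
    · exact Or.inr h
    · exact Or.inl (Or.inl ⟨hx.1.le, h⟩)
  have e3 : ∫ x in (0.8:ℝ)..1, aMu μ x * Real.sin (Real.pi*x) ^ 3
      = μ * (F17 1 - F17 0.8) := by
    apply key
    intro x hx
    rw [Set.uIoc_of_le (by norm_num : (0.8:ℝ) ≤ 1)] at hx
    exact Or.inl (Or.inr hx)
  have e2 : ∫ x in (0.2:ℝ)..0.8, aMu μ x * Real.sin (Real.pi*x) ^ 3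
      = F17 0.8 - F17 0.2 := by
    rw [← intS17]
    apply intervalIntegral.integral_congr
    intro x hx
    rw [Set.uIcc_of_le (by norm_num : (0.2:ℝ) ≤ 0.8)] at hx
    have hxU : x ∉ U := by
      rw [hUdef]
      rintro (⟨-, h2⟩ | ⟨h3, -⟩)
      · exact absurd hx.1 (not_le.mpr h2)
      · exact absurd hx.2 (not_le.mpr h3)
    simp only [aMu]; rw [if_neg hxU]
  have split : ∫ x in (0:ℝ)..1, aMu μ x * Real.sin (Real.pi*x) ^ 3
      = (∫ x in (0:ℝ)..0.2, aMu μ x * Real.sin (Real.pi*x) ^ 3)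
        + (∫ x in (0.2:ℝ)..0.8, aMu μ x * Real.sin (Real.pi*x) ^ 3)
        + (∫ x in (0.8:ℝ)..1, aMu μ x * Real.sin (Real.pi*x) ^ 3) := by
    rw [intervalIntegral.integral_add_adjacent_intervals (hInt 0 0.2) (hInt 0.2 0.8),
      intervalIntegral.integral_add_adjacent_intervals (hInt 0 0.8) (hInt 0.8 1)]
  have s5 : Real.sqrt 5 ^ 2 = 5 := Real.sq_sqrt (by norm_num)
  have hcos : Real.cos (Real.pi/5) = (1 + Real.sqrt 5)/4 := Real.cos_pi_div_five
  have hsin_nonneg : 0 ≤ Real.sin (Real.pi/5) :=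
    Real.sin_nonneg_of_nonneg_of_le_pi (by positivity)
      (by nlinarith [Real.pi_pos])
  have hsin_sq : Real.sin (Real.pi/5) ^ 2 = (5 - Real.sqrt 5)/8 := by
    have := Real.sin_sq_add_cos_sq (Real.pi/5)
    rw [hcos] at this
    nlinarith [this, s5]
  have hsqrt : Real.sqrt ((5 - Real.sqrt 5)/2) = 2 * Real.sin (Real.pi/5) := by
    rw [show (5 - Real.sqrt 5)/2 = (2 * Real.sin (Real.pi/5))^2 by nlinarith [hsin_sq]]
    exact Real.sqrt_sq (by positivity)
  have hπ : Real.pi ≠ 0 := Real.pi_ne_zero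
  have main : -2 * ∫ x in (0:ℝ)..1, aMu μ x * Real.sin (Real.pi * x) ^ 3
      = -(Real.sqrt ((5 - Real.sqrt 5) / 2) * (5 - Real.sqrt 5) ^ 2 * (μ - 1))
          / (128 * Real.pi) := by
    rw [split, e1, e2, e3, hF17_0, hF17_1, hF17_08, hF17_02, hsqrt, hcos]
    field_simp
    ring_nf
    linear_combination (128*Real.sin (Real.pi*(1/5))*(μ-1)) * s5
  refine ⟨main, fun hμ1 => ?_⟩
  rw [main]
  have h5lt : Real.sqrt 5 < 5 := by nlinarith [Real.sqrt_nonneg 5, s5]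
  have h1 : 0 < Real.sqrt ((5 - Real.sqrt 5)/2) := Real.sqrt_pos.mpr (by linarith)
  have h2 : 0 < (5 - Real.sqrt 5)^2 := pow_pos (by linarith) 2
  have h3 : 0 < μ - 1 := by linarith
  have h4 : 0 < 128 * Real.pi := by positivity
  exact div_neg_of_neg_of_pos (by nlinarith [mul_pos (mul_pos h1 h2) h3]) h4
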